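/- arXiv:1608.02041 — 3 statements merged into one kernel-verified Lean document; each statement's English description precedes it below -/
import Mathlib

section
/- Let C₁ and C₂ be two ellipses in ℝ² centered at the origin with semi-major axes a₁ > a₂ > 0 and semi-minor axes b₁, b₂ with a₁ > b₁ > 0, a₂ > b₂ > 0, a₁ ≠ a₂ and b₁ ≠ b₂. If neither ellipse is contained in the closed region bounded by the other, then there exist exactly four distinct lines in ℝ² tangent to both C₁ and C₂ that do not meet the open interiors of either ellipse. -/
/-- A line in `ℂ ≅ ℝ²`. -/
def IsLine (ℓ : Set ℂ) : Prop :=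
  ∃ p d : ℂ, d ≠ 0 ∧ ℓ = {z | ∃ t : ℝ, z = p + (t : ℂ) * d}

/-- The ellipse centered at the origin with parametrization `t ↦ A e^{it} + B e^{-it}`,
having semi-major axis `|A| + |B|` and semi-minor axis `||A| - |B||`. -/
def ellipseCurve (A B : ℂ) : Set ℂ :=
  {z | ∃ t : ℝ, z = A * Complex.exp ((t : ℂ) * Complex.I)
    + B * Complex.exp (-((t : ℂ) * Complex.I))}

/-- The closed region bounded by the ellipse `ellipseCurve A B`. -/
def ellipseClosedRegion (A B : ℂ) : Set ℂ :=
  {z | ∃ w : ℂ, ‖w‖ ≤ 1 ∧ z = A * w + B * (starRingEnd ℂ) w}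

/-- The open region bounded by the ellipse `ellipseCurve A B`. -/
def ellipseOpenRegion (A B : ℂ) : Set ℂ :=
  {z | ∃ w : ℂ, ‖w‖ < 1 ∧ z = A * w + B * (starRingEnd ℂ) w}

/-- A common exterior tangent line of the two ellipses: a line tangent to each
(meeting each at exactly one point) that does not meet the open interiors. -/
def IsCommonExteriorTangent (A₁ B₁ A₂ B₂ : ℂ) (ℓ : Set ℂ) : Prop :=
  IsLine ℓ ∧ (∃! z : ℂ, z ∈ ℓ ∧ z ∈ ellipseCurve A₁ B₁) ∧
    (∃! z : ℂ, z ∈ ℓ ∧ z ∈ ellipseCurve A₂ B₂) ∧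
    ℓ ∩ ellipseOpenRegion A₁ B₁ = ∅ ∧ ℓ ∩ ellipseOpenRegion A₂ B₂ = ∅

open Complex

noncomputable section
local notation "conj'" => starRingEnd ℂ

def lineSet (n : ℂ) (c : ℝ) : Set ℂ := {z | (conj' n * z).re = c}

def alph (A B n : ℂ) : ℂ := conj' n * A + n * conj' B

lemma re_smul (r : ℝ) (z : ℂ) : ((r:ℂ) * z).re = r * z.re := by
  simp [Complex.mul_re]

lemma alph_smul (A B : ℂ) (r : ℝ) (n : ℂ) :
    alph A B ((r:ℂ) * n) = (r:ℂ) * alph A B n := by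
  simp [alph, map_mul, Complex.conj_ofReal]; ring

lemma alph_ne_zero {A B : ℂ} (hab : ‖A‖ ≠ ‖B‖) {n : ℂ}
    (hn : n ≠ 0) : alph A B n ≠ 0 := by
  intro h
  have h1 : conj' n * A = -(n * conj' B) := by
    have := h; unfold alph at this; linear_combination this
  have h2 : ‖n‖ * ‖A‖ = ‖n‖ * ‖B‖ := by
    have := congrArg norm h1
    simpa [map_mul, map_neg, Complex.norm_conj] using this
  have hn' : ‖n‖ ≠ 0 := by simpa using hn
  exact hab (mul_left_cancel₀ hn' h2)

lemma re_line_curve (A B n w : ℂ) :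
    (conj' n * (A * w + B * conj' w)).re = (alph A B n * w).re := by
  have key : conj' n * (A * w + B * conj' w) + conj' (conj' n * (A * w + B * conj' w))
      = alph A B n * w + conj' (alph A B n * w) := by
    simp only [map_add, map_mul, Complex.conj_conj, alph]
    ring
  have h1 := Complex.add_conj (conj' n * (A * w + B * conj' w))
  have h2 := Complex.add_conj (alph A B n * w)
  rw [h1, h2] at key
  have := congrArg Complex.re key
  simpa using this

lemma mem_lineSet {n : ℂ} {c : ℝ} {z : ℂ} : z ∈ lineSet n c ↔ (conj' n * z).re = c :=
  Iff.rfl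

lemma lineSet_smul {r : ℝ} (hr : r ≠ 0) (n : ℂ) (c : ℝ) :
    lineSet ((r:ℂ) * n) c = lineSet n (c / r) := by
  ext z
  simp only [mem_lineSet, map_mul, Complex.conj_ofReal, mul_assoc, re_smul]
  constructor
  · intro h; field_simp [← h]; rw [← h]; ring
  · intro h; rw [h]; field_simp

lemma isLine_lineSet {n : ℂ} (hn : n ≠ 0) (c : ℝ) : IsLine (lineSet n c) := by
  have hns : (normSq n : ℝ) ≠ 0 := by simpa [Complex.normSq_eq_zero] using hn
  have hnsC : ((normSq n : ℝ) : ℂ) ≠ 0 := by exact_mod_cast hns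
  refine ⟨((c / normSq n : ℝ) : ℂ) * n, Complex.I * n, by simp [hn, Complex.I_ne_zero], ?_⟩
  ext z
  simp only [mem_lineSet, Set.mem_setOf_eq]
  constructor
  · intro hz
    refine ⟨(conj' n * z).im / normSq n, ?_⟩
    have key : conj' n * z = ((c : ℂ) + ((conj' n * z).im : ℂ) * Complex.I) := by
      apply Complex.ext <;> simp [hz]
    have hinv : ((normSq n : ℝ) : ℂ) * z
        = n * ((c : ℂ) + ((conj' n * z).im : ℂ) * Complex.I) := by
      rw [← key, ← Complex.mul_conj]; ring
    apply mul_left_cancel₀ hnsC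
    rw [hinv]
    push_cast
    field_simp
  · rintro ⟨t, rfl⟩
    have h1 : conj' n * (((c / normSq n : ℝ) : ℂ) * n + (t : ℂ) * (Complex.I * n))
        = ((c / normSq n : ℝ) : ℂ) * ((normSq n : ℝ) : ℂ)
          + (t : ℂ) * (Complex.I * ((normSq n : ℝ) : ℂ)) := by
      rw [← Complex.mul_conj]; ring
    rw [h1]
    push_cast
    field_simp
    simp

lemma line_rep {ℓ : Set ℂ} (h : IsLine ℓ) :
    ∃ n : ℂ, ∃ c : ℝ, n ≠ 0 ∧ ℓ = lineSet n c := by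
  obtain ⟨p, d, hd, rfl⟩ := h
  refine ⟨Complex.I * d, (conj' (Complex.I * d) * p).re, by simp [hd, Complex.I_ne_zero], ?_⟩
  have hds : (normSq d : ℝ) ≠ 0 := by simpa [Complex.normSq_eq_zero] using hd
  ext z
  simp only [Set.mem_setOf_eq, mem_lineSet]
  constructor
  · rintro ⟨t, rfl⟩
    have : conj' (Complex.I * d) * (p + (t:ℂ) * d)
        = conj' (Complex.I * d) * p + (t:ℂ) * (-Complex.I * ((normSq d : ℝ):ℂ)) := by
      rw [← Complex.mul_conj]; simp [map_mul, Complex.conj_I]; ring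
    rw [this]
    simp [Complex.add_re, Complex.mul_re, Complex.mul_im]
  · intro hz
    -- z - p is orthogonal to I*d in the Re(conj (I d) ·) sense, so z - p = t d
    set u := z - p with hu
    have h0 : (conj' (Complex.I * d) * u).re = 0 := by
      have : conj' (Complex.I * d) * u
          = conj' (Complex.I * d) * z - conj' (Complex.I * d) * p := by ring
      rw [this, Complex.sub_re, hz, sub_self]
    refine ⟨(conj' d * u).re / normSq d, ?_⟩
    have key : conj' d * u = (((conj' d * u).re : ℝ) : ℂ) := by
      apply Complex.ext
      · simp
      · have : (conj' (Complex.I * d) * u).re = (conj' d * u).im := by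
          simp [map_mul, Complex.conj_I, Complex.mul_re, Complex.mul_im]
          ring
        rw [this] at h0
        simp [h0]
    have hinv : ((normSq d : ℝ) : ℂ) * z
        = ((normSq d : ℝ) : ℂ) * p + (((conj' d * u).re : ℝ) : ℂ) * d := by
      rw [← key, ← Complex.mul_conj]
      simp only [hu]
      ring
    have hdC : ((normSq d : ℝ) : ℂ) ≠ 0 := by exact_mod_cast hds
    apply mul_left_cancel₀ hdC
    rw [hinv]
    push_cast
    field_simp

lemma lineSet_inj {n n' : ℂ} {c c' : ℝ} (hn : n ≠ 0) (hn' : n' ≠ 0)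
    (h : lineSet n c = lineSet n' c') :
    ∃ r : ℝ, r ≠ 0 ∧ n' = (r:ℂ) * n ∧ c' = r * c := by
  have hns : (normSq n : ℝ) ≠ 0 := by simpa [Complex.normSq_eq_zero] using hn
  have hnsC : ((normSq n : ℝ) : ℂ) ≠ 0 := by exact_mod_cast hns
  -- two points on the line
  set z₀ : ℂ := ((c / normSq n : ℝ) : ℂ) * n with hz₀
  have hz₀m : z₀ ∈ lineSet n c := by
    simp only [mem_lineSet, hz₀]
    have : conj' n * (((c / normSq n : ℝ) : ℂ) * n)
        = ((c / normSq n : ℝ) : ℂ) * ((normSq n : ℝ):ℂ) := by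
      rw [← Complex.mul_conj]; ring
    rw [this]
    push_cast
    field_simp
    simp
  have hz₁m : z₀ + Complex.I * n ∈ lineSet n c := by
    simp only [mem_lineSet, mul_add]
    have : conj' n * (Complex.I * n) = Complex.I * ((normSq n : ℝ):ℂ) := by
      rw [← Complex.mul_conj]; ring
    rw [Complex.add_re, this]
    have h2 : (Complex.I * ((normSq n : ℝ):ℂ)).re = 0 := by
      simp [Complex.mul_re]
    rw [h2, add_zero]
    exact hz₀m
  rw [h] at hz₀m hz₁m
  simp only [mem_lineSet, mul_add] at hz₀m hz₁m
  rw [Complex.add_re, hz₀m] at hz₁m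
  have h0 : (conj' n' * (Complex.I * n)).re = 0 := by linarith
  have him : (conj' n' * n).im = 0 := by
    have : (conj' n' * (Complex.I * n)).re = -(conj' n' * n).im := by
      simp [Complex.mul_re, Complex.mul_im]; ring
    rw [this] at h0; linarith
  have hreal : conj' n' * n = (((conj' n' * n).re : ℝ) : ℂ) := by
    apply Complex.ext
    · simp
    · simp [him]
  set t : ℝ := (conj' n' * n).re with ht
  have htne : t ≠ 0 := by
    intro h0'
    rw [h0'] at hreal
    push_cast at hreal
    rcases mul_eq_zero.1 hreal with h' | h'
    · exact hn' (by simpa using h')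
    · exact hn h'
  have hprop : n' = ((t / normSq n : ℝ):ℂ) * n := by
    have hkey : ((normSq n : ℝ) : ℂ) * n' = (t : ℂ) * n := by
      have e1 : conj' (conj' n' * n) = n' * conj' n := by
        simp [map_mul]
      have e2 : n' * conj' n = ((t:ℝ):ℂ) := by
        rw [← e1, hreal]
        exact Complex.conj_ofReal _
      calc ((normSq n : ℝ) : ℂ) * n' = (n * conj' n) * n' := by rw [Complex.mul_conj]
        _ = (n' * conj' n) * n := by ring
        _ = ((t:ℝ):ℂ) * n := by rw [e2]
    apply mul_left_cancel₀ hnsC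
    rw [hkey]
    push_cast
    field_simp
  refine ⟨t / normSq n, div_ne_zero htne hns, hprop, ?_⟩
  rw [← hz₀m, hprop]
  have hcomp : conj' (((t / normSq n : ℝ):ℂ) * n) * z₀
      = ((t / normSq n : ℝ):ℂ) * (((c / normSq n : ℝ):ℂ) * (n * conj' n)) := by
    simp only [hz₀, map_mul, Complex.conj_ofReal]
    ring
  rw [hcomp, Complex.mul_conj]
  simp only [← Complex.ofReal_mul, Complex.ofReal_re]
  field_simp

lemma conj_exp_I (t : ℝ) :
    conj' (Complex.exp ((t:ℂ) * Complex.I)) = Complex.exp (-((t:ℂ) * Complex.I)) := by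
  rw [← Complex.exp_conj]
  congr 1
  simp [map_mul, Complex.conj_ofReal, Complex.conj_I]

lemma mem_curve_iff {A B z : ℂ} :
    z ∈ ellipseCurve A B ↔ ∃ w : ℂ, ‖w‖ = 1 ∧ z = A * w + B * conj' w := by
  constructor
  · rintro ⟨t, rfl⟩
    exact ⟨Complex.exp ((t:ℂ) * Complex.I), Complex.norm_exp_ofReal_mul_I t,
      by rw [conj_exp_I]⟩
  · rintro ⟨w, hw, rfl⟩
    refine ⟨Complex.arg w, ?_⟩
    have hwe : Complex.exp ((Complex.arg w : ℂ) * Complex.I) = w := by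
      have := Complex.norm_mul_exp_arg_mul_I w
      rwa [hw, Complex.ofReal_one, one_mul] at this
    have hce : Complex.exp (-((Complex.arg w : ℂ) * Complex.I)) = conj' w := by
      rw [← conj_exp_I, hwe]
    rw [hwe, hce]

lemma curve_param_inj {A B : ℂ} (hab : ‖A‖ ≠ ‖B‖) {w₁ w₂ : ℂ}
    (h : A * w₁ + B * conj' w₁ = A * w₂ + B * conj' w₂) : w₁ = w₂ := by
  have h1 : A * (w₁ - w₂) = -(B * conj' (w₁ - w₂)) := by
    simp only [map_sub]; linear_combination h
  have h2 : ‖A‖ * ‖w₁ - w₂‖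
      = ‖B‖ * ‖w₁ - w₂‖ := by
    have := congrArg norm h1
    simpa only [norm_mul, norm_neg, Complex.norm_conj] using this
  have h3 : ‖w₁ - w₂‖ = 0 := by
    by_contra h'
    exact hab (mul_right_cancel₀ h' h2)
  simpa [sub_eq_zero] using h3

lemma normSq_one_of_abs_one {w : ℂ} (hw : ‖w‖ = 1) : normSq w = 1 := by
  rw [← Complex.sq_norm, hw]; norm_num

lemma tangent_unique {A B n : ℂ} {c : ℝ} (hab : ‖A‖ ≠ ‖B‖)
    (hn : n ≠ 0) (hc : |c| = ‖alph A B n‖) :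
    ∃! z : ℂ, z ∈ lineSet n c ∧ z ∈ ellipseCurve A B := by
  set α := alph A B n with hα
  have hα0 : α ≠ 0 := alph_ne_zero hab hn
  have habs0 : ‖α‖ ≠ 0 := by simpa using hα0
  set w₀ : ℂ := (c:ℂ) / α with hw₀
  have hαw₀ : α * w₀ = (c:ℂ) := by rw [hw₀]; field_simp
  have habsw₀ : ‖w₀‖ = 1 := by
    rw [hw₀, norm_div, Complex.norm_real, Real.norm_eq_abs, ← hc]
    field_simp [hc]
    rw [hc]; exact div_self habs0
  have hns : normSq α = c^2 := by
    rw [← Complex.sq_norm, ← hc]; exact _root_.sq_abs c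
  refine ⟨A * w₀ + B * conj' w₀, ⟨?_, ?_⟩, ?_⟩
  · rw [mem_lineSet, re_line_curve, ← hα, hαw₀, Complex.ofReal_re]
  · exact mem_curve_iff.2 ⟨w₀, habsw₀, rfl⟩
  · rintro z ⟨hz1, hz2⟩
    obtain ⟨w, hw, rfl⟩ := mem_curve_iff.1 hz2
    rw [mem_lineSet, re_line_curve, ← hα] at hz1
    have key : α * w = (c:ℂ) := by
      have h0 : normSq (α * w - (c:ℂ)) = 0 := by
        rw [Complex.normSq_sub, Complex.normSq_mul, normSq_one_of_abs_one hw,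
          Complex.normSq_ofReal, Complex.conj_ofReal]
        have : (α * w * (c:ℂ)).re = c * c := by
          rw [mul_comm, re_smul, hz1]
        rw [this, hns]
        ring
      have := Complex.normSq_eq_zero.1 h0
      linear_combination this
    have hw' : w = w₀ := by
      rw [hw₀, ← key]
      field_simp
    rw [hw']

lemma tangent_abs {A B n : ℂ} {c : ℝ} (hab : ‖A‖ ≠ ‖B‖)
    (hn : n ≠ 0) (h : ∃! z : ℂ, z ∈ lineSet n c ∧ z ∈ ellipseCurve A B) :
    |c| = ‖alph A B n‖ := by
  set α := alph A B n with hα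
  have hα0 : α ≠ 0 := alph_ne_zero hab hn
  have habs0 : 0 < ‖α‖ := by simpa [norm_pos_iff] using hα0
  obtain ⟨z, ⟨hz1, hz2⟩, huniq⟩ := h
  obtain ⟨w, hw, rfl⟩ := mem_curve_iff.1 hz2
  rw [mem_lineSet, re_line_curve, ← hα] at hz1
  have hle : |c| ≤ ‖α‖ := by
    rw [← hz1]
    calc |(α * w).re| ≤ ‖α * w‖ := Complex.abs_re_le_norm _
      _ = ‖α‖ * ‖w‖ := norm_mul _ _
      _ = ‖α‖ := by rw [hw, mul_one]
  rcases eq_or_lt_of_le hle with heq | hlt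
  · exact heq
  · exfalso
    set r : ℝ := c / ‖α‖ with hr
    have hr2 : r^2 < 1 := by
      rw [hr, div_pow]
      rw [div_lt_one (by positivity)]
      nlinarith [abs_nonneg c, _root_.sq_abs c]
    set s : ℝ := Real.sqrt (1 - r^2) with hs
    have hs2 : s^2 = 1 - r^2 := Real.sq_sqrt (by linarith)
    have hs0 : 0 < s := Real.sqrt_pos.2 (by linarith)
    have habsu : ‖conj' α / (‖α‖ : ℂ)‖ = 1 := by
      rw [norm_div, Complex.norm_conj, Complex.norm_real, Real.norm_eq_abs, abs_of_pos habs0]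
      exact div_self (ne_of_gt habs0)
    have hαu : α * (conj' α / (‖α‖ : ℂ)) = ((‖α‖ : ℝ) : ℂ) := by
      rw [mul_div_assoc', Complex.mul_conj, ← Complex.sq_norm]
      push_cast
      rw [sq, mul_div_assoc, div_self (show ((‖α‖ : ℝ):ℂ) ≠ 0 by
        exact_mod_cast ne_of_gt habs0), mul_one]
    have key : ∀ e : ℝ, e^2 = s^2 → ∀ hz : True,
        ‖((r:ℂ) + (e:ℂ) * Complex.I) * (conj' α / (‖α‖ : ℂ))‖ = 1 ∧
        (α * (((r:ℂ) + (e:ℂ) * Complex.I) * (conj' α / (‖α‖ : ℂ)))).re = c := by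
      intro e he _
      constructor
      · have h12 : r^2 + e^2 = 1 := by rw [he, hs2]; ring
        rw [norm_mul, habsu, mul_one, Complex.norm_add_mul_I, h12, Real.sqrt_one]
      · rw [show α * (((r:ℂ) + (e:ℂ) * Complex.I) * (conj' α / (‖α‖ : ℂ)))
            = ((r:ℂ) + (e:ℂ) * Complex.I) * (α * (conj' α / (‖α‖ : ℂ))) by ring,
          hαu]
        simp only [add_mul, Complex.add_re, re_smul, Complex.ofReal_re]
        rw [hr]
        have : ((e:ℂ) * Complex.I * ((‖α‖ : ℝ) : ℂ)).re = 0 := by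
          simp [Complex.mul_re]
        rw [this]
        field_simp
        simp
    obtain ⟨ha1, ha2⟩ := key s (by ring) trivial
    obtain ⟨hb1, hb2⟩ := key (-s) (by ring) trivial
    set ua : ℂ := ((r:ℂ) + (s:ℂ) * Complex.I) * (conj' α / (‖α‖ : ℂ)) with hua
    set ub : ℂ := ((r:ℂ) + ((-s : ℝ):ℂ) * Complex.I) * (conj' α / (‖α‖ : ℂ)) with hub
    have hza := huniq (A * ua + B * conj' ua)
      ⟨by rw [mem_lineSet, re_line_curve, ← hα]; exact ha2, mem_curve_iff.2 ⟨ua, ha1, rfl⟩⟩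
    have hzb := huniq (A * ub + B * conj' ub)
      ⟨by rw [mem_lineSet, re_line_curve, ← hα]; exact hb2, mem_curve_iff.2 ⟨ub, hb1, rfl⟩⟩
    have hzz : A * ua + B * conj' ua = A * ub + B * conj' ub := by rw [hza, hzb]
    have huu : ua = ub := curve_param_inj hab hzz
    rw [hua, hub] at huu
    have hd : ((2*s : ℝ):ℂ) * Complex.I * (conj' α / (‖α‖ : ℂ)) = 0 := by
      push_cast at huu ⊢
      linear_combination huu
    rcases mul_eq_zero.1 hd with h' | h'
    · rcases mul_eq_zero.1 h' with h'' | h''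
      · have : (2*s : ℝ) = 0 := by exact_mod_cast h''
        linarith
      · exact Complex.I_ne_zero h''
    · rw [div_eq_zero_iff] at h'
      rcases h' with h'' | h''
      · exact hα0 (by simpa using h'')
      · exact habs0.ne' (by simpa using h'')

lemma ext_empty {A B n : ℂ} {c : ℝ} (hα : alph A B n ≠ 0)
    (hc : |c| = ‖alph A B n‖) :
    lineSet n c ∩ ellipseOpenRegion A B = ∅ := by
  ext z
  simp only [Set.mem_inter_iff, Set.mem_empty_iff_false, iff_false, not_and]
  intro hz1 hz2
  obtain ⟨w, hw, rfl⟩ := hz2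
  rw [mem_lineSet, re_line_curve] at hz1
  have h1 : |c| ≤ ‖alph A B n‖ * ‖w‖ := by
    rw [← hz1]
    calc |(alph A B n * w).re| ≤ ‖alph A B n * w‖ := Complex.abs_re_le_norm _
      _ = _ := norm_mul _ _
  have h2 : ‖alph A B n‖ * ‖w‖ < ‖alph A B n‖ := by
    have : 0 < ‖alph A B n‖ := by simpa [norm_pos_iff] using hα
    nlinarith [this]
  rw [hc] at h1
  linarith

lemma normSq_alph (A B n : ℂ) :
    normSq (alph A B n) = normSq n * (normSq A + normSq B)
      + 2 * (conj' n ^ 2 * (A * B)).re := by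
  simp only [alph, Complex.normSq_apply, Complex.add_re, Complex.add_im, Complex.mul_re,
    Complex.mul_im, Complex.conj_re, Complex.conj_im, pow_two]
  ring

lemma normSq_alph_le (A B n : ℂ) :
    normSq (alph A B n) ≤ normSq n * (‖A‖ + ‖B‖)^2 := by
  rw [normSq_alph]
  have h1 : (conj' n ^ 2 * (A * B)).re ≤ normSq n * (‖A‖ * ‖B‖) := by
    calc (conj' n ^ 2 * (A * B)).re ≤ ‖conj' n ^ 2 * (A * B)‖ := Complex.re_le_norm _
      _ = ‖n‖ ^ 2 * (‖A‖ * ‖B‖) := by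
          simp [map_mul, map_pow, Complex.norm_conj]
      _ = normSq n * (‖A‖ * ‖B‖) := by rw [Complex.sq_norm]
  have h2 : normSq A = ‖A‖ ^ 2 := (Complex.sq_norm A).symm
  have h3 : normSq B = ‖B‖ ^ 2 := (Complex.sq_norm B).symm
  nlinarith [h1, Complex.normSq_nonneg n]

/-- the quadratic form coefficients -/
lemma Gform (A₁ B₁ A₂ B₂ n : ℂ) :
    normSq (alph A₁ B₁ n) - normSq (alph A₂ B₂ n)
      = (normSq A₁ + normSq B₁ - normSq A₂ - normSq B₂ + 2*(A₁*B₁ - A₂*B₂).re) * n.re^2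
        + 2 * (2*(A₁*B₁ - A₂*B₂).im) * n.re * n.im
        + (normSq A₁ + normSq B₁ - normSq A₂ - normSq B₂ - 2*(A₁*B₁ - A₂*B₂).re) * n.im^2 := by
  simp only [alph, Complex.normSq_apply, Complex.add_re, Complex.add_im, Complex.mul_re,
    Complex.mul_im, Complex.conj_re, Complex.conj_im, Complex.sub_re, Complex.sub_im]
  ring

lemma mk_re (x y : ℝ) : ((x:ℂ) + (y:ℂ)*Complex.I).re = x := by simp
lemma mk_im (x y : ℝ) : ((x:ℂ) + (y:ℂ)*Complex.I).im = y := by simp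

lemma ext_mul_helper {n : ℂ} {r x y : ℝ} (h1 : n.re = r*x) (h2 : n.im = r*y) :
    n = (r:ℂ) * ((x:ℂ) + (y:ℂ)*Complex.I) := by
  apply Complex.ext
  · simp [Complex.mul_re, h1]
  · simp [Complex.mul_im, h2]

/-- An indefinite binary quadratic form has exactly two independent null directions. -/
lemma quad_roots (aa bb cc : ℝ)
    (hpos : ∃ n : ℂ, 0 < aa*n.re^2 + 2*bb*n.re*n.im + cc*n.im^2)
    (hneg : ∃ n : ℂ, aa*n.re^2 + 2*bb*n.re*n.im + cc*n.im^2 < 0) :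
    ∃ n₁ n₂ : ℂ, n₁ ≠ 0 ∧ n₂ ≠ 0 ∧ (∀ r : ℝ, n₂ ≠ (r:ℂ) * n₁) ∧
      (aa*n₁.re^2 + 2*bb*n₁.re*n₁.im + cc*n₁.im^2 = 0) ∧
      (aa*n₂.re^2 + 2*bb*n₂.re*n₂.im + cc*n₂.im^2 = 0) ∧
      (∀ n : ℂ, n ≠ 0 → aa*n.re^2 + 2*bb*n.re*n.im + cc*n.im^2 = 0 →
        ∃ r : ℝ, r ≠ 0 ∧ (n = (r:ℂ) * n₁ ∨ n = (r:ℂ) * n₂)) := by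
  obtain ⟨np, hnp⟩ := hpos
  obtain ⟨nm, hnm⟩ := hneg
  have hD : 0 < bb^2 - aa*cc := by
    by_contra hD'
    push_neg at hD'
    rcases eq_or_ne aa 0 with ha | ha
    · have hb : bb = 0 := by
        by_contra hb
        have h1 : 0 < bb^2 := by positivity
        rw [ha] at hD'
        nlinarith
      subst ha; subst hb
      rcases le_or_gt cc 0 with h | h
      · nlinarith [sq_nonneg np.im]
      · nlinarith [sq_nonneg nm.im]
    · have key : ∀ x y : ℝ, 0 ≤ aa * (aa*x^2 + 2*bb*x*y + cc*y^2) := by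
        intro x y
        nlinarith [sq_nonneg (aa*x + bb*y), sq_nonneg y]
      rcases lt_or_gt_of_ne ha with h | h
      · nlinarith [key np.re np.im]
      · nlinarith [key nm.re nm.im]
  set sD : ℝ := Real.sqrt (bb^2 - aa*cc) with hsD
  have hsD2 : sD^2 = bb^2 - aa*cc := Real.sq_sqrt hD.le
  have hsD0 : 0 < sD := Real.sqrt_pos.2 hD
  rcases eq_or_ne aa 0 with ha | ha
  · -- aa = 0, bb ≠ 0
    have hb : bb ≠ 0 := by
      intro h; rw [ha, h] at hD; nlinarith
    refine ⟨(1:ℝ) + (0:ℝ)*Complex.I, ((-cc : ℝ):ℂ) + ((2*bb : ℝ):ℂ)*Complex.I,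
      ?_, ?_, ?_, ?_, ?_, ?_⟩
    · intro h
      have := congrArg Complex.re h
      rw [mk_re] at this
      simp at this
    · intro h
      have := congrArg Complex.im h
      rw [mk_im] at this
      simp at this
      exact hb (by linarith)
    · intro r h
      have := congrArg Complex.im h
      rw [mk_im] at this
      simp [Complex.mul_im, mk_re, mk_im] at this
      exact hb (by linarith)
    · rw [mk_re, mk_im, ha]; ring
    · rw [mk_re, mk_im, ha]; ring
    · intro n hn h0
      rw [ha] at h0
      rcases eq_or_ne n.im 0 with hy | hy
      · refine ⟨n.re, ?_, Or.inl ?_⟩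
        · intro h; apply hn; apply Complex.ext <;> simp [h, hy]
        · exact ext_mul_helper (by ring) (by rw [hy]; ring)
      · have hlin : 2*bb*n.re + cc*n.im = 0 := by
          rcases mul_eq_zero.1 (show n.im * (2*bb*n.re + cc*n.im) = 0 by
            linear_combination h0) with h | h
          · exact absurd h hy
          · exact h
        refine ⟨n.im / (2*bb), div_ne_zero hy (by simpa using hb), Or.inr ?_⟩
        refine ext_mul_helper ?_ (by field_simp)
        field_simp
        linarith
  · -- aa ≠ 0
    refine ⟨((-bb + sD : ℝ):ℂ) + (aa:ℝ)*Complex.I, ((-bb - sD : ℝ):ℂ) + (aa:ℝ)*Complex.I,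
      ?_, ?_, ?_, ?_, ?_, ?_⟩
    · intro h
      have := congrArg Complex.im h
      rw [mk_im] at this
      simp at this
      exact ha this
    · intro h
      have := congrArg Complex.im h
      rw [mk_im] at this
      simp at this
      exact ha this
    · intro r h
      have h1 := congrArg Complex.im h
      have h2 := congrArg Complex.re h
      rw [mk_im] at h1
      rw [mk_re] at h2
      simp [Complex.mul_im, Complex.mul_re, mk_re, mk_im] at h1 h2
      have hr : r = 1 := by
        rcases mul_eq_zero.1 (show (r - 1) * aa = 0 by linarith) with h' | h'
        · linarith
        · exact absurd h' ha
      rw [hr, one_mul] at h2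
      linarith
    · rw [mk_re, mk_im]
      linear_combination aa * hsD2
    · rw [mk_re, mk_im]
      linear_combination aa * hsD2
    · intro n hn h0
      have hfact : (aa * n.re + (bb - sD) * n.im) * (aa * n.re + (bb + sD) * n.im) = 0 := by
        linear_combination aa * h0 - n.im^2 * hsD2
      have hyne : n.im ≠ 0 := by
        intro hy
        rw [hy] at h0
        simp at h0
        rcases h0 with h | h
        · exact ha h
        · exact hn (by apply Complex.ext <;> simp [h, hy])
      rcases mul_eq_zero.1 hfact with h | h
      · refine ⟨n.im / aa, div_ne_zero hyne ha, Or.inl (ext_mul_helper ?_ (by field_simp))⟩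
        field_simp
        linarith
      · refine ⟨n.im / aa, div_ne_zero hyne ha, Or.inr (ext_mul_helper ?_ (by field_simp))⟩
        field_simp
        linarith

lemma normSq_ne {A B : ℂ} (hab : ‖A‖ ≠ ‖B‖) :
    normSq A ≠ normSq B := by
  intro h
  exact hab (by rw [Complex.norm_def, Complex.norm_def, h])

lemma Gneg {A₁ B₁ A₂ B₂ : ℂ} (hab1 : ‖A₁‖ ≠ ‖B₁‖)
    (hnc1 : ¬ ellipseCurve A₂ B₂ ⊆ ellipseClosedRegion A₁ B₁) :
    ∃ n : ℂ, normSq (alph A₁ B₁ n) - normSq (alph A₂ B₂ n) < 0 := by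
  obtain ⟨z, hz1, hz2⟩ := Set.not_subset.1 hnc1
  set k : ℝ := normSq A₁ - normSq B₁ with hk
  have hkne : k ≠ 0 := sub_ne_zero.2 (normSq_ne hab1)
  have hkC : ((k:ℝ):ℂ) ≠ 0 := by exact_mod_cast hkne
  have hkeq : ((k:ℝ):ℂ) = A₁ * conj' A₁ - B₁ * conj' B₁ := by
    rw [Complex.mul_conj, Complex.mul_conj, hk]
    push_cast
    ring
  set w₀ : ℂ := (conj' A₁ * z - B₁ * conj' z) / ((k:ℝ):ℂ) with hw₀def
  have hcw : conj' w₀ = (A₁ * conj' z - conj' B₁ * z) / ((k:ℝ):ℂ) := by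
    rw [hw₀def, map_div₀, map_sub, map_mul, map_mul, Complex.conj_conj, Complex.conj_conj,
      Complex.conj_ofReal]
  have hw₀ : A₁ * w₀ + B₁ * conj' w₀ = z := by
    rw [hw₀def, hcw]
    field_simp
    linear_combination (-z) * hkeq
  have habsw : 1 < ‖w₀‖ := by
    by_contra h
    push_neg at h
    exact hz2 ⟨w₀, h, hw₀.symm⟩
  set n : ℂ := (A₁ * w₀ - B₁ * conj' w₀) / ((k:ℝ):ℂ) with hndef
  have hcn : conj' n = (conj' A₁ * conj' w₀ - conj' B₁ * w₀) / ((k:ℝ):ℂ) := by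
    rw [hndef, map_div₀, map_sub, map_mul, map_mul, Complex.conj_conj, Complex.conj_ofReal]
  have halphn : alph A₁ B₁ n = conj' w₀ := by
    rw [alph, hcn, hndef]
    field_simp
    linear_combination (-(conj' w₀)) * hkeq
  obtain ⟨u, hu, hzu⟩ := mem_curve_iff.1 hz1
  have e1 : (alph A₂ B₂ n * u).re = normSq w₀ := by
    rw [← re_line_curve, ← hzu, ← hw₀, re_line_curve, halphn]
    rw [show conj' w₀ * w₀ = ((normSq w₀ : ℝ):ℂ) by rw [mul_comm, Complex.mul_conj]]
    exact Complex.ofReal_re _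
  have e2 : normSq w₀ ≤ ‖alph A₂ B₂ n‖ := by
    rw [← e1]
    calc (alph A₂ B₂ n * u).re ≤ ‖alph A₂ B₂ n * u‖ := Complex.re_le_norm _
      _ = ‖alph A₂ B₂ n‖ * ‖u‖ := norm_mul _ _
      _ = ‖alph A₂ B₂ n‖ := by rw [hu, mul_one]
  have e3 : normSq (alph A₁ B₁ n) = normSq w₀ := by rw [halphn, Complex.normSq_conj]
  have e4 : 1 < normSq w₀ := by
    rw [← Complex.sq_norm]
    nlinarith
  have e5 : (normSq w₀)^2 ≤ normSq (alph A₂ B₂ n) := by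
    nlinarith [e2, Complex.normSq_nonneg w₀, Complex.sq_norm (alph A₂ B₂ n),
      mul_self_le_mul_self (Complex.normSq_nonneg w₀) e2]
  refine ⟨n, ?_⟩
  rw [e3]
  nlinarith [e5, e4, mul_pos (show (0:ℝ) < normSq w₀ - 1 by linarith)
    (show (0:ℝ) < normSq w₀ by linarith)]

lemma Gpos {A₁ B₁ A₂ B₂ : ℂ}
    (hmaj : ‖A₂‖ + ‖B₂‖ < ‖A₁‖ + ‖B₁‖)
    (hmaj2 : 0 < ‖A₂‖ + ‖B₂‖) :
    ∃ n : ℂ, 0 < normSq (alph A₁ B₁ n) - normSq (alph A₂ B₂ n) := by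
  have key : ∃ n : ℂ, n ≠ 0 ∧
      normSq (alph A₁ B₁ n) = normSq n * (‖A₁‖ + ‖B₁‖)^2 := by
    rcases eq_or_ne (A₁ * B₁) 0 with h0 | h0
    · refine ⟨1, one_ne_zero, ?_⟩
      rw [normSq_alph, h0]
      have hab0 : ‖A₁‖ * ‖B₁‖ = 0 := by
        rw [← norm_mul, h0, norm_zero]
      simp only [mul_zero, Complex.zero_re, Complex.normSq_one]
      rw [← Complex.sq_norm, ← Complex.sq_norm]
      nlinarith [hab0]
    · obtain ⟨r, hr⟩ := IsAlgClosed.exists_pow_nat_eq (A₁ * B₁) (n := 2) (by norm_num)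
      have hrne : r ≠ 0 := by
        intro h; apply h0; rw [← hr, h]; ring
      refine ⟨r, hrne, ?_⟩
      rw [normSq_alph]
      have h1 : conj' r ^ 2 * (A₁ * B₁) = ((normSq (A₁ * B₁) : ℝ):ℂ) := by
        rw [← hr, ← map_pow, mul_comm, Complex.mul_conj]
      rw [h1, Complex.ofReal_re]
      have h2 : normSq r = ‖A₁‖ * ‖B₁‖ := by
        rw [← Complex.sq_norm, ← norm_pow, hr, norm_mul]
      have h3 : normSq (A₁ * B₁) = normSq A₁ * normSq B₁ := Complex.normSq_mul _ _
      rw [h2, h3, ← Complex.sq_norm A₁, ← Complex.sq_norm B₁]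
      ring
  obtain ⟨n, hn, heq⟩ := key
  refine ⟨n, ?_⟩
  have hle := normSq_alph_le A₂ B₂ n
  have hpos : 0 < normSq n := Complex.normSq_pos.2 hn
  rw [heq]
  have hsq : (‖A₂‖ + ‖B₂‖)^2 < (‖A₁‖ + ‖B₁‖)^2 := by
    nlinarith
  nlinarith [hle, mul_lt_mul_of_pos_left hsq hpos]

/-- Two origin-centered ellipses with distinct semi-major and semi-minor axes,
neither contained in the closed region bounded by the other, admit exactly four
common exterior tangent lines. -/
theorem stmt_6 (A₁ B₁ A₂ B₂ : ℂ)
    (hmaj : ‖A₁‖ + ‖B₁‖ > ‖A₂‖ + ‖B₂‖)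
    (hmaj2 : ‖A₂‖ + ‖B₂‖ > 0)
    (hax1 : ‖A₁‖ + ‖B₁‖ > |‖A₁‖ - ‖B₁‖|)
    (hmin1 : |‖A₁‖ - ‖B₁‖| > 0)
    (hax2 : ‖A₂‖ + ‖B₂‖ > |‖A₂‖ - ‖B₂‖|)
    (hmin2 : |‖A₂‖ - ‖B₂‖| > 0)
    (hminne : |‖A₁‖ - ‖B₁‖| ≠ |‖A₂‖ - ‖B₂‖|)
    (hnc1 : ¬ ellipseCurve A₂ B₂ ⊆ ellipseClosedRegion A₁ B₁)
    (hnc2 : ¬ ellipseCurve A₁ B₁ ⊆ ellipseClosedRegion A₂ B₂) :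
    ∃ ℓ₁ ℓ₂ ℓ₃ ℓ₄ : Set ℂ,
      ℓ₁ ≠ ℓ₂ ∧ ℓ₁ ≠ ℓ₃ ∧ ℓ₁ ≠ ℓ₄ ∧ ℓ₂ ≠ ℓ₃ ∧ ℓ₂ ≠ ℓ₄ ∧ ℓ₃ ≠ ℓ₄ ∧
      IsCommonExteriorTangent A₁ B₁ A₂ B₂ ℓ₁ ∧
      IsCommonExteriorTangent A₁ B₁ A₂ B₂ ℓ₂ ∧
      IsCommonExteriorTangent A₁ B₁ A₂ B₂ ℓ₃ ∧
      IsCommonExteriorTangent A₁ B₁ A₂ B₂ ℓ₄ ∧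
      ∀ ℓ : Set ℂ, IsCommonExteriorTangent A₁ B₁ A₂ B₂ ℓ →
        ℓ = ℓ₁ ∨ ℓ = ℓ₂ ∨ ℓ = ℓ₃ ∨ ℓ = ℓ₄ := by
  have hab1 : ‖A₁‖ ≠ ‖B₁‖ := sub_ne_zero.1 (abs_pos.1 hmin1)
  have hab2 : ‖A₂‖ ≠ ‖B₂‖ := sub_ne_zero.1 (abs_pos.1 hmin2)
  set aa : ℝ := normSq A₁ + normSq B₁ - normSq A₂ - normSq B₂ + 2*(A₁*B₁ - A₂*B₂).re with haa
  set bb : ℝ := 2*(A₁*B₁ - A₂*B₂).im with hbb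
  set cc : ℝ := normSq A₁ + normSq B₁ - normSq A₂ - normSq B₂ - 2*(A₁*B₁ - A₂*B₂).re with hcc
  have hGiff : ∀ n : ℂ, normSq (alph A₁ B₁ n) - normSq (alph A₂ B₂ n)
      = aa*n.re^2 + 2*bb*n.re*n.im + cc*n.im^2 := by
    intro n
    rw [haa, hbb, hcc]
    exact Gform A₁ B₁ A₂ B₂ n
  have hpos : ∃ n : ℂ, 0 < aa*n.re^2 + 2*bb*n.re*n.im + cc*n.im^2 := by
    obtain ⟨n, hn⟩ := Gpos hmaj hmaj2
    exact ⟨n, by rw [← hGiff n]; exact hn⟩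
  have hneg : ∃ n : ℂ, aa*n.re^2 + 2*bb*n.re*n.im + cc*n.im^2 < 0 := by
    obtain ⟨n, hn⟩ := Gneg hab1 hnc1
    exact ⟨n, by rw [← hGiff n]; exact hn⟩
  obtain ⟨n₁, n₂, hn₁0, hn₂0, hnp, hq1, hq2, hcl⟩ := quad_roots aa bb cc hpos hneg
  -- the common value of the support function along the two null directions
  have habseq : ∀ n : ℂ, (aa*n.re^2 + 2*bb*n.re*n.im + cc*n.im^2 = 0) →
      ‖alph A₁ B₁ n‖ = ‖alph A₂ B₂ n‖ := by
    intro n h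
    rw [Complex.norm_def, Complex.norm_def]
    congr 1
    have := hGiff n
    rw [h] at this
    linarith
  have habs1 := habseq n₁ hq1
  have habs2 := habseq n₂ hq2
  set c₁ : ℝ := ‖alph A₁ B₁ n₁‖ with hc₁
  set c₂ : ℝ := ‖alph A₁ B₁ n₂‖ with hc₂
  have hc₁pos : 0 < c₁ := by
    rw [hc₁]; exact norm_pos_iff.mpr (alph_ne_zero hab1 hn₁0)
  have hc₂pos : 0 < c₂ := by
    rw [hc₂]; exact norm_pos_iff.mpr (alph_ne_zero hab1 hn₂0)
  have mkT : ∀ (n : ℂ) (c : ℝ), n ≠ 0 → |c| = ‖alph A₁ B₁ n‖ →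
      |c| = ‖alph A₂ B₂ n‖ →
      IsCommonExteriorTangent A₁ B₁ A₂ B₂ (lineSet n c) := by
    intro n c hn h1 h2
    exact ⟨isLine_lineSet hn c, tangent_unique hab1 hn h1, tangent_unique hab2 hn h2,
      ext_empty (alph_ne_zero hab1 hn) h1, ext_empty (alph_ne_zero hab2 hn) h2⟩
  have hT1 : IsCommonExteriorTangent A₁ B₁ A₂ B₂ (lineSet n₁ c₁) :=
    mkT n₁ c₁ hn₁0 (by rw [abs_of_pos hc₁pos]) (by rw [abs_of_pos hc₁pos]; exact habs1)
  have hT2 : IsCommonExteriorTangent A₁ B₁ A₂ B₂ (lineSet n₁ (-c₁)) :=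
    mkT n₁ (-c₁) hn₁0 (by rw [abs_neg, abs_of_pos hc₁pos])
      (by rw [abs_neg, abs_of_pos hc₁pos]; exact habs1)
  have hT3 : IsCommonExteriorTangent A₁ B₁ A₂ B₂ (lineSet n₂ c₂) :=
    mkT n₂ c₂ hn₂0 (by rw [abs_of_pos hc₂pos]) (by rw [abs_of_pos hc₂pos]; exact habs2)
  have hT4 : IsCommonExteriorTangent A₁ B₁ A₂ B₂ (lineSet n₂ (-c₂)) :=
    mkT n₂ (-c₂) hn₂0 (by rw [abs_neg, abs_of_pos hc₂pos])
      (by rw [abs_neg, abs_of_pos hc₂pos]; exact habs2)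
  -- distinctness helpers
  have hsame : ∀ (n : ℂ) (c c' : ℝ), n ≠ 0 → 0 < c → lineSet n c = lineSet n (-c) → False := by
    intro n c c' hn hcpos h
    obtain ⟨r, hr0, hrn, hrc⟩ := lineSet_inj hn hn h
    have h1 : ((r:ℂ) - 1) * n = 0 := by linear_combination -hrn
    rcases mul_eq_zero.1 h1 with h' | h'
    · have : r = (1:ℝ) := by
        have : (r:ℂ) = 1 := by linear_combination h'
        exact_mod_cast this
      rw [this] at hrc
      simp at hrc
      linarith
    · exact hn h'
  have hdiff : ∀ (c c' : ℝ), lineSet n₁ c = lineSet n₂ c' → False := by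
    intro c c' h
    obtain ⟨r, hr0, hrn, hrc⟩ := lineSet_inj hn₁0 hn₂0 h
    exact hnp r hrn
  refine ⟨lineSet n₁ c₁, lineSet n₁ (-c₁), lineSet n₂ c₂, lineSet n₂ (-c₂),
    fun h => hsame n₁ c₁ c₁ hn₁0 hc₁pos h,
    fun h => hdiff c₁ c₂ h,
    fun h => hdiff c₁ (-c₂) h,
    fun h => hdiff (-c₁) c₂ h,
    fun h => hdiff (-c₁) (-c₂) h,
    fun h => hsame n₂ c₂ c₂ hn₂0 hc₂pos h,
    hT1, hT2, hT3, hT4, ?_⟩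
  -- classification
  intro ℓ hT
  obtain ⟨hline, ht1, ht2, _, _⟩ := hT
  obtain ⟨n, c, hn0, rfl⟩ := line_rep hline
  have habsc1 : |c| = ‖alph A₁ B₁ n‖ := tangent_abs hab1 hn0 ht1
  have habsc2 : |c| = ‖alph A₂ B₂ n‖ := tangent_abs hab2 hn0 ht2
  have hGn : aa*n.re^2 + 2*bb*n.re*n.im + cc*n.im^2 = 0 := by
    rw [← hGiff n, ← Complex.sq_norm, ← Complex.sq_norm, ← habsc1, ← habsc2]
    ring
  obtain ⟨r, hr0, hcase⟩ := hcl n hn0 hGn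
  have hrC : ((r:ℝ):ℂ) ≠ 0 := by exact_mod_cast hr0
  rcases hcase with hc | hc
  · -- n = r * n₁
    have hls : lineSet n c = lineSet n₁ (c / r) := by rw [hc]; exact lineSet_smul hr0 n₁ c
    have habs' : |c / r| = c₁ := by
      have h1 : ‖alph A₁ B₁ n‖ = |r| * c₁ := by
        rw [hc, alph_smul, norm_mul, Complex.norm_real, Real.norm_eq_abs, hc₁]
      rw [abs_div, habsc1, h1]
      field_simp
    rcases (abs_eq hc₁pos.le).1 habs' with h' | h'
    · left; rw [hls, h']
    · right; left; rw [hls, h']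
  · have hls : lineSet n c = lineSet n₂ (c / r) := by rw [hc]; exact lineSet_smul hr0 n₂ c
    have habs' : |c / r| = c₂ := by
      have h1 : ‖alph A₁ B₁ n‖ = |r| * c₂ := by
        rw [hc, alph_smul, norm_mul, Complex.norm_real, Real.norm_eq_abs, hc₂]
      rw [abs_div, habsc1, h1]
      field_simp
    rcases (abs_eq hc₂pos.le).1 habs' with h' | h'
    · right; right; left; rw [hls, h']
    · right; right; right; rw [hls, h']
end
end

section
/- Let h₂, h̃₂ : [0, 2π] → ℂ \ {0} be continuous maps with h₂(0) = h₂(2π) and h̃₂(0) = h̃₂(2π). Suppose the winding number of h̃₂ around 0 equals 1 and the winding number of h₂ around 0 equals 0. Then there exist φ ∈ [0, 2π) and λ > 0 with h₂(φ) = λ·h̃₂(φ). -/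
/-- Two closed curves in `ℂ \ {0}` over `[0,2π]`, one with winding number `1` around
the origin and the other with winding number `0` (expressed via continuous argument
functions), must cross the same ray from the origin at a common parameter. -/
theorem stmt_7 (h₂ ht₂ : ℝ → ℂ) (θ₂ θt₂ : ℝ → ℝ)
    (hc : ContinuousOn h₂ (Set.Icc 0 (2 * Real.pi)))
    (hc' : ContinuousOn ht₂ (Set.Icc 0 (2 * Real.pi)))
    (hnz : ∀ t ∈ Set.Icc 0 (2 * Real.pi), h₂ t ≠ 0)
    (hnz' : ∀ t ∈ Set.Icc 0 (2 * Real.pi), ht₂ t ≠ 0)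
    (hcl : h₂ (2 * Real.pi) = h₂ 0) (hcl' : ht₂ (2 * Real.pi) = ht₂ 0)
    (hθc : ContinuousOn θ₂ (Set.Icc 0 (2 * Real.pi)))
    (hθc' : ContinuousOn θt₂ (Set.Icc 0 (2 * Real.pi)))
    (harg : ∀ t ∈ Set.Icc 0 (2 * Real.pi),
      h₂ t = (‖h₂ t‖ : ℂ) * Complex.exp ((θ₂ t : ℂ) * Complex.I))
    (harg' : ∀ t ∈ Set.Icc 0 (2 * Real.pi),
      ht₂ t = (‖ht₂ t‖ : ℂ) * Complex.exp ((θt₂ t : ℂ) * Complex.I))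
    (hwind : θ₂ (2 * Real.pi) - θ₂ 0 = 0)
    (hwind' : θt₂ (2 * Real.pi) - θt₂ 0 = 2 * Real.pi) :
    ∃ φ ∈ Set.Ico 0 (2 * Real.pi), ∃ lam : ℝ, 0 < lam ∧ h₂ φ = (lam : ℂ) * ht₂ φ := by
  have pi_pos := Real.pi_pos
  have h2pi : (0:ℝ) < 2 * Real.pi := by linarith
  set f : ℝ → ℝ := fun t => θ₂ t - θt₂ t with hf
  have hfc : ContinuousOn f (Set.Icc 0 (2 * Real.pi)) := hθc.sub hθc'
  set k : ℤ := ⌊f 0 / (2 * Real.pi)⌋ with hk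
  have hk1 : 2 * Real.pi * (k:ℝ) ≤ f 0 := by
    rw [hk, mul_comm]
    exact (le_div_iff₀ h2pi).mp (Int.floor_le _)
  have hk2 : f 0 < 2 * Real.pi * ((k:ℝ) + 1) := by
    rw [hk, mul_comm]
    exact (div_lt_iff₀ h2pi).mp (Int.lt_floor_add_one _)
  have hfend : f (2 * Real.pi) = f 0 - 2 * Real.pi := by
    simp only [hf]; linarith
  have hmem : (2 * Real.pi * k) ∈ Set.Icc (f (2 * Real.pi)) (f 0) := by
    rw [hfend]
    constructor
    · push_cast at hk2 ⊢; linarith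
    · exact hk1
  obtain ⟨φ, hφ, hfφ⟩ := intermediate_value_Icc' (le_of_lt h2pi) hfc hmem
  -- key lemma
  have key : ∀ ψ ∈ Set.Icc 0 (2 * Real.pi), ∀ m : ℤ, θ₂ ψ - θt₂ ψ = 2 * Real.pi * m →
      ∃ lam : ℝ, 0 < lam ∧ h₂ ψ = (lam : ℂ) * ht₂ ψ := by
    intro ψ hψ m hm
    have ha : (0:ℝ) < ‖h₂ ψ‖ := by
      simpa using (norm_pos_iff.mpr (hnz ψ hψ))
    have hb : (0:ℝ) < ‖ht₂ ψ‖ := by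
      simpa using (norm_pos_iff.mpr (hnz' ψ hψ))
    refine ⟨‖h₂ ψ‖ / ‖ht₂ ψ‖, div_pos ha hb, ?_⟩
    have hexp : Complex.exp ((θ₂ ψ : ℂ) * Complex.I) =
        Complex.exp ((θt₂ ψ : ℂ) * Complex.I) := by
      have hθ : (θ₂ ψ : ℂ) = (θt₂ ψ : ℂ) + (m : ℂ) * (2 * Real.pi) := by
        have : θ₂ ψ = θt₂ ψ + m * (2 * Real.pi) := by linarith [hm]
        push_cast [this]; ring
      rw [hθ, add_mul, Complex.exp_add, mul_assoc,
        Complex.exp_int_mul_two_pi_mul_I, mul_one]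
    rw [harg ψ hψ, harg' ψ hψ, hexp]
    simp only [norm_mul, Complex.norm_exp_ofReal_mul_I, Complex.norm_real, norm_norm, mul_one]
    have hbne : ((‖ht₂ ψ‖):ℂ) ≠ 0 := by exact_mod_cast hb.ne'
    push_cast
    field_simp
  -- now handle the endpoint case
  rcases lt_or_eq_of_le hφ.2 with hlt | heq
  · exact ⟨φ, ⟨hφ.1, hlt⟩, key φ hφ k hfφ⟩
  · refine ⟨0, ⟨le_refl 0, h2pi⟩, ?_⟩
    apply key 0 (Set.left_mem_Icc.mpr (le_of_lt h2pi)) (k + 1)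
    have : f 0 = 2 * Real.pi * k + 2 * Real.pi := by
      rw [← heq] at hfend
      rw [hfφ] at hfend
      linarith
    have hf0 : θ₂ 0 - θt₂ 0 = f 0 := rfl
    push_cast
    rw [hf0, this]
    ring
end

section
/- Let g : (0,∞) → ℝ be given by g(r) = 1 − 2M/r − a²M²s/r⁴ for parameters M > 0, a ∈ ℝ, s ∈ [0,1]. Then g has exactly one root r₁ in (0,∞) when a²s > 0, this root satisfies r₁ > 2M, and r₁ depends monotonically (non-decreasingly) on s. -/
private lemma poly_iff (M a s r : ℝ) (hr : 0 < r) :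
    (1 - 2 * M / r - a ^ 2 * M ^ 2 * s / r ^ 4 = 0) ↔
    r ^ 4 - 2 * M * r ^ 3 - a ^ 2 * M ^ 2 * s = 0 := by
  rw [sub_sub, sub_eq_zero, div_add_div _ _ (ne_of_gt hr) (by positivity),
    eq_div_iff (by positivity)]
  constructor <;> intro h <;> nlinarith [pow_pos hr 3, pow_pos hr 4]

private lemma root_gt (M a s r : ℝ) (hM : 0 < M) (hs : 0 < a ^ 2 * s) (hr : 0 < r)
    (h : 1 - 2 * M / r - a ^ 2 * M ^ 2 * s / r ^ 4 = 0) : 2 * M < r := by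
  rw [poly_iff M a s r hr] at h
  by_contra hc
  push_neg at hc
  nlinarith [pow_pos hr 3, mul_pos hs (mul_pos hM hM),
    mul_nonneg (le_of_lt (pow_pos hr 3)) (sub_nonneg.2 hc)]

private lemma mono (M a s x y : ℝ) (hM : 0 < M) (hx : 2 * M < x) (hxy : x < y) :
    x ^ 4 - 2 * M * x ^ 3 - a ^ 2 * M ^ 2 * s < y ^ 4 - 2 * M * y ^ 3 - a ^ 2 * M ^ 2 * s := by
  have hy : 2 * M < y := lt_trans hx hxy
  have hx0 : 0 < x := lt_trans (by linarith) hx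
  have hy0 : 0 < y := lt_trans hx0 hxy
  have key : y ^ 4 - 2 * M * y ^ 3 - (x ^ 4 - 2 * M * x ^ 3)
      = (y - x) * ((y - 2 * M) * (y ^ 2 + x * y + x ^ 2) + x ^ 3) := by ring
  have hpos : 0 < (y - x) * ((y - 2 * M) * (y ^ 2 + x * y + x ^ 2) + x ^ 3) :=
    mul_pos (sub_pos.2 hxy)
      (add_pos (mul_pos (sub_pos.2 hy) (by positivity)) (pow_pos hx0 3))
  linarith

/-- The function `g(r) = 1 - 2M/r - a²M²s/r⁴` has exactly one positive root when
`a² s > 0`; the root is larger than `2M` and depends monotonically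
(non-decreasingly) on `s`. -/
theorem stmt_15 (M a : ℝ) (hM : 0 < M) :
    ∀ s ∈ Set.Icc (0 : ℝ) 1, 0 < a ^ 2 * s →
      (∃! r : ℝ, 0 < r ∧ 1 - 2 * M / r - a ^ 2 * M ^ 2 * s / r ^ 4 = 0) ∧
      (∀ r : ℝ, 0 < r → 1 - 2 * M / r - a ^ 2 * M ^ 2 * s / r ^ 4 = 0 → 2 * M < r) ∧
      (∀ s' ∈ Set.Icc (0 : ℝ) 1, 0 < a ^ 2 * s' → s ≤ s' →
        ∀ r r' : ℝ, 0 < r → 0 < r' →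
          1 - 2 * M / r - a ^ 2 * M ^ 2 * s / r ^ 4 = 0 →
          1 - 2 * M / r' - a ^ 2 * M ^ 2 * s' / r' ^ 4 = 0 → r ≤ r') := by
  intro s hsIcc hs
  refine ⟨?_, fun r hr h => root_gt M a s r hM hs hr h, ?_⟩
  · -- existence and uniqueness
    have hcont : ContinuousOn (fun r : ℝ => r ^ 4 - 2 * M * r ^ 3 - a ^ 2 * M ^ 2 * s)
        (Set.Icc (2 * M) (2 * M + a ^ 2 * M ^ 2 * s + 1)) := by
      fun_prop
    have hle : 2 * M ≤ 2 * M + a ^ 2 * M ^ 2 * s + 1 := by nlinarith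
    have hA : (2 * M) ^ 4 - 2 * M * (2 * M) ^ 3 - a ^ 2 * M ^ 2 * s ≤ 0 := by nlinarith
    have hB : 0 ≤ (2 * M + a ^ 2 * M ^ 2 * s + 1) ^ 4
        - 2 * M * (2 * M + a ^ 2 * M ^ 2 * s + 1) ^ 3 - a ^ 2 * M ^ 2 * s := by
      set R := 2 * M + a ^ 2 * M ^ 2 * s + 1 with hR
      have h1 : (1:ℝ) ≤ R := by simp only [hR]; nlinarith
      have h2 : a ^ 2 * M ^ 2 * s + 1 ≤ R - 2 * M := by simp only [hR]; ring_nf; nlinarith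
      have h3 : R ^ 4 - 2 * M * R ^ 3 = R ^ 3 * (R - 2 * M) := by ring
      have h4 : (1:ℝ) ≤ R ^ 3 := by nlinarith [mul_nonneg (sub_nonneg.2 h1) (mul_nonneg (le_of_lt (lt_of_lt_of_le one_pos h1)) (le_of_lt (lt_of_lt_of_le one_pos h1))), mul_nonneg (sub_nonneg.2 h1) (sub_nonneg.2 h1)]
      nlinarith [mul_le_mul h4 h2 (by nlinarith) (by positivity)]
    obtain ⟨r, hrmem, hr0⟩ := intermediate_value_Icc hle hcont ⟨hA, hB⟩
    simp only at hr0
    have hrpos : 0 < r := lt_of_lt_of_le (by linarith) hrmem.1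
    refine ⟨r, ⟨hrpos, (poly_iff M a s r hrpos).2 hr0⟩, ?_⟩
    rintro y ⟨hy0, hy⟩
    have hy' := (poly_iff M a s y hy0).1 hy
    have hygt : 2 * M < y := root_gt M a s y hM hs hy0 hy
    have hrgt : 2 * M < r := root_gt M a s r hM hs hrpos ((poly_iff M a s r hrpos).2 hr0)
    rcases lt_trichotomy y r with h | h | h
    · exfalso; have := mono M a s y r hM hygt h; rw [hy', hr0] at this; exact lt_irrefl 0 this
    · exact h
    · exfalso; have := mono M a s r y hM hrgt h; rw [hy', hr0] at this; exact lt_irrefl 0 this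
  · -- monotonicity in s
    intro s' hs'Icc hs' hss' r r' hr hr' h h'
    have hp := (poly_iff M a s r hr).1 h
    have hp' := (poly_iff M a s' r' hr').1 h'
    have hrgt : 2 * M < r := root_gt M a s r hM hs hr h
    have hr'gt : 2 * M < r' := root_gt M a s' r' hM hs' hr' h'
    by_contra hcon
    push_neg at hcon
    have := mono M a s' r' r hM hr'gt hcon
    rw [hp'] at this
    have hle : a ^ 2 * M ^ 2 * s ≤ a ^ 2 * M ^ 2 * s' := by
      nlinarith [mul_nonneg (mul_nonneg (sq_nonneg a) (sq_nonneg M)) (sub_nonneg.2 hss')]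
    linarith
end
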